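/- For k ≥ 3 and 1 ≤ r ≤ ⌊k/2⌋ − 1, the space of maximal ((r+2)×(r+2)) minors of the (r+2)×(k−r) catalecticant matrix with (i,j)-entry (i+j)!·x_{i+j} (0 ≤ i ≤ r+1, 0 ≤ j ≤ k−r−1) is spanned by binomial(k−r, r+2) linearly independent polynomials; that is, the choose-(r+2)-columns minors of this matrix are linearly independent in ℝ[x_0,...,x_k]. -/

import Mathlib

open MvPolynomial

/-- A strictly monotone `ℕ`-valued function on `Fin n` grows at least linearly. -/
lemma strictMono_gap {n : ℕ} {c : Fin n → ℕ} (hc : StrictMono c) :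
    ∀ a b : Fin n, a ≤ b → c a + ((b : ℕ) - (a : ℕ)) ≤ c b := by
  intro a b hab
  obtain ⟨d, hd⟩ : ∃ d, (b : ℕ) = (a : ℕ) + d := ⟨(b : ℕ) - a, by
    have := (Fin.le_def.mp hab); omega⟩
  clear hab
  induction d generalizing b with
  | zero =>
      have : b = a := Fin.ext (by omega)
      subst this; omega
  | succ d ih =>
      have hb' : (a : ℕ) + d < n := by have := b.isLt; omega
      have h1 := ih ⟨(a : ℕ) + d, hb'⟩ rfl
      have h2 : (⟨(a : ℕ) + d, hb'⟩ : Fin n) < b := by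
        rw [Fin.lt_def]; simp; omega
      have := hc h2
      simp at h1 ⊢
      omega

lemma catKey {n : ℕ} {c c₀ : Fin n → ℕ} (hc : StrictMono c) (hc₀ : StrictMono c₀)
    (σ : Equiv.Perm (Fin n))
    (h1 : ∀ j : Fin n, ∃ i, ((σ i : ℕ) + c i = (j : ℕ) + c₀ j))
    (hno : ∀ j : Fin n, (∀ l, l < j → c l = c₀ l) → c₀ j ≤ c j) :
    c = c₀ ∧ σ = 1 := by
  have main : ∀ m : ℕ, ∀ j : Fin n, (j : ℕ) = m → c j = c₀ j ∧ σ j = j := by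
    intro m
    induction m using Nat.strong_induction_on with
    | _ m IH =>
      intro j hj
      have IH' : ∀ l : Fin n, l < j → c l = c₀ l ∧ σ l = l := by
        intro l hl
        exact IH (l : ℕ) (by rw [← hj]; exact Fin.lt_def.mp hl) l rfl
      obtain ⟨i, hi⟩ := h1 j
      have hij : (j : ℕ) ≤ (i : ℕ) := by
        by_contra hlt
        push_neg at hlt
        have hlt' : i < j := Fin.lt_def.mpr hlt
        obtain ⟨hci, hσi⟩ := IH' i hlt'
        rw [hσi, hci] at hi
        have : c₀ i < c₀ j := hc₀ hlt'
        omega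
      have hσi : (j : ℕ) ≤ (σ i : ℕ) := by
        by_contra hlt
        push_neg at hlt
        have hlt' : σ i < j := Fin.lt_def.mpr hlt
        have hfix : σ (σ i) = σ i := (IH' (σ i) hlt').2
        have : σ i = i := σ.injective hfix
        rw [this] at hlt'
        exact absurd (Fin.lt_def.mp hlt') (by omega)
      have hgap : c j + ((i : ℕ) - (j : ℕ)) ≤ c i :=
        strictMono_gap hc j i (Fin.le_def.mpr hij)
      have hcle : c j ≤ c₀ j := by omega
      have hcge : c₀ j ≤ c j := hno j (fun l hl => (IH' l hl).1)
      have hceq : c j = c₀ j := le_antisymm hcle hcge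
      have hii : (i : ℕ) = (j : ℕ) := by omega
      have hival : i = j := Fin.ext hii
      subst hival
      exact ⟨hceq, Fin.ext (by omega)⟩
  constructor
  · funext j; exact (main (j : ℕ) j rfl).1
  · ext j
    simpa using congrArg Fin.val (main (j : ℕ) j rfl).2

lemma catKey' {n : ℕ} {c c₀ : Fin n → ℕ} (hc : StrictMono c) (hc₀ : StrictMono c₀)
    (σ : Equiv.Perm (Fin n))
    (h1 : ∀ j : Fin n, ∃ i, ((σ i : ℕ) + c i = (j : ℕ) + c₀ j)) :
    (∃ j : Fin n, (∀ l, l < j → c l = c₀ l) ∧ c j < c₀ j) ∨ (c = c₀ ∧ σ = 1) := by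
  by_cases hno : ∀ j : Fin n, (∀ l, l < j → c l = c₀ l) → c₀ j ≤ c j
  · exact Or.inr (catKey hc hc₀ σ h1 hno)
  · push_neg at hno
    obtain ⟨j, hj1, hj2⟩ := hno
    exact Or.inl ⟨j, hj1, hj2⟩

lemma prod_monomial' {σ' : Type*} {R : Type*} [CommSemiring R] {ι : Type*}
    (s : Finset ι) (d : ι → σ' →₀ ℕ) (a : ι → R) :
    (∏ i ∈ s, (monomial (d i) (a i) : MvPolynomial σ' R)) =
      monomial (∑ i ∈ s, d i) (∏ i ∈ s, a i) := by
  classical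
  induction s using Finset.induction_on with
  | empty => simp
  | insert _ _ h ih =>
      rw [Finset.prod_insert h, ih, Finset.sum_insert h, Finset.prod_insert h, monomial_mul]

/-- The maximal minor of the `(r+2)×(k-r)` catalecticant matrix with `(i,j)`-entry
`(i+j)!·x_{i+j}` obtained by selecting the columns `c 0, …, c (r+1)`. -/
noncomputable def catMinor (k r : ℕ) (c : Fin (r + 2) → Fin (k - r)) :
    MvPolynomial (Fin (k + 1)) ℝ :=
  Matrix.det (Matrix.of fun i j : Fin (r + 2) =>
    C (((i.val + (c j).val).factorial : ℝ)) *
      X (⟨i.val + (c j).val, by omega⟩ : Fin (k + 1)))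


/-- The monomial `x_{c 0} x_{c 1 + 1} ⋯ x_{c (r+1) + (r+1)}` (as an exponent vector). -/
noncomputable def mcMon (k r : ℕ) (c : Fin (r + 2) → Fin (k - r)) : Fin (k + 1) →₀ ℕ :=
  ∑ j : Fin (r + 2), Finsupp.single (⟨(j : ℕ) + (c j : ℕ), by omega⟩ : Fin (k + 1)) 1

/-- The exponent vector of the term of the minor corresponding to a permutation `σ`. -/
noncomputable def catD (k r : ℕ) (c : Fin (r + 2) → Fin (k - r))
    (σ : Equiv.Perm (Fin (r + 2))) : Fin (k + 1) →₀ ℕ :=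
  ∑ i : Fin (r + 2), Finsupp.single (⟨(σ i : ℕ) + (c i : ℕ), by omega⟩ : Fin (k + 1)) 1

lemma catMinor_coeff (k r : ℕ) (c : Fin (r + 2) → Fin (k - r)) (m : Fin (k + 1) →₀ ℕ) :
    coeff m (catMinor k r c) =
      ∑ σ : Equiv.Perm (Fin (r + 2)),
        ((Equiv.Perm.sign σ : ℤ) : ℝ) *
          (if catD k r c σ = m then
            ∏ i : Fin (r + 2), (((σ i : ℕ) + (c i : ℕ)).factorial : ℝ) else 0) := by
  classical
  rw [catMinor, Matrix.det_apply', coeff_sum]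
  refine Finset.sum_congr rfl fun σ _ => ?_
  rw [show (∏ i : Fin (r + 2), (Matrix.of fun i j : Fin (r + 2) =>
        C (((i.val + (c j).val).factorial : ℝ)) *
          X (⟨i.val + (c j).val, by omega⟩ : Fin (k + 1))) (σ i) i)
      = monomial (catD k r c σ)
          (∏ i : Fin (r + 2), (((σ i : ℕ) + (c i : ℕ)).factorial : ℝ)) by
    rw [catD, ← prod_monomial']
    refine Finset.prod_congr rfl fun i _ => ?_
    rw [Matrix.of_apply, C_mul_X_eq_monomial]]
  rw [← zsmul_eq_mul, coeff_smul, coeff_monomial, zsmul_eq_mul]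

lemma fin_sum_single_apply {k r : ℕ} (e : Fin (r + 2) → Fin (k + 1)) (v : Fin (k + 1)) :
    ((∑ i : Fin (r + 2), Finsupp.single (e i) (1 : ℕ)) : Fin (k + 1) →₀ ℕ) v
      = ∑ i : Fin (r + 2), if e i = v then 1 else 0 := by
  classical
  rw [Finsupp.finset_sum_apply]
  exact Finset.sum_congr rfl fun i _ => Finsupp.single_apply

lemma catD_exists {k r : ℕ} (c c₀ : Fin (r + 2) → Fin (k - r)) (hc₀ : StrictMono c₀)
    (σ : Equiv.Perm (Fin (r + 2))) (h : catD k r c σ = mcMon k r c₀) (j : Fin (r + 2)) :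
    ∃ i, ((σ i : ℕ) + (c i : ℕ) = (j : ℕ) + (c₀ j : ℕ)) := by
  classical
  set v : Fin (k + 1) := ⟨(j : ℕ) + (c₀ j : ℕ), by omega⟩ with hv
  have h2 : (mcMon k r c₀) v = 1 := by
    rw [mcMon, fin_sum_single_apply]
    rw [Finset.sum_eq_single j]
    · rw [if_pos rfl]
    · intro j' _ hne
      rw [if_neg]
      intro hEq
      apply hne
      have hnat : (j' : ℕ) + (c₀ j' : ℕ) = (j : ℕ) + (c₀ j : ℕ) := by
        simpa [hv] using congrArg Fin.val hEq
      rcases lt_trichotomy j' j with hlt | heq | hgt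
      · have h3 := Fin.lt_def.mp (hc₀ hlt)
        have h4 := Fin.lt_def.mp hlt
        omega
      · exact heq
      · have h3 := Fin.lt_def.mp (hc₀ hgt)
        have h4 := Fin.lt_def.mp hgt
        omega
    · intro h; exact absurd (Finset.mem_univ j) h
  have h1 : (catD k r c σ) v = 1 := by rw [h]; exact h2
  rw [catD, fin_sum_single_apply] at h1
  have hne0 : (∑ i : Fin (r + 2),
      if (⟨(σ i : ℕ) + (c i : ℕ), by omega⟩ : Fin (k + 1)) = v then 1 else 0) ≠ 0 := by
    rw [h1]; exact one_ne_zero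
  obtain ⟨i, _, hi⟩ := Finset.exists_ne_zero_of_sum_ne_zero hne0
  refine ⟨i, ?_⟩
  split_ifs at hi with hEq
  · simpa [hv] using congrArg Fin.val hEq
  · exact absurd rfl hi

lemma catD_one (k r : ℕ) (c : Fin (r + 2) → Fin (k - r)) : catD k r c 1 = mcMon k r c := rfl

/-- For `k ≥ 3` and `1 ≤ r ≤ ⌊k/2⌋ − 1`, the `C(k−r, r+2)` maximal minors of the
catalecticant matrix (one for each strictly increasing choice of `r+2` of the `k−r`
columns) are linearly independent polynomials in `ℝ[x_0,…,x_k]`. -/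
theorem catalecticant_minors_linearIndependent (k r : ℕ) (hk : 3 ≤ k) (hr1 : 1 ≤ r)
    (hr2 : r ≤ k / 2 - 1) :
    LinearIndependent ℝ
      (fun c : {c : Fin (r + 2) → Fin (k - r) // StrictMono c} => catMinor k r c.val) := by
  classical
  set I := {c : Fin (r + 2) → Fin (k - r) // StrictMono c} with hI
  haveI : Fintype I := Fintype.ofFinite I
  haveI : WellFoundedLT (Fin (r + 2)) := Finite.to_wellFoundedLT
  set b : I → Lex (Fin (r + 2) → ℕ) :=
    fun c => toLex ((fun j => ((c.val j : ℕ))) : Fin (r + 2) → ℕ) with hb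
  have hbinj : Function.Injective b := by
    intro a a' hab
    apply Subtype.ext; funext j
    have h' : ((fun j => ((a.val j : ℕ))) : Fin (r + 2) → ℕ)
        = fun j => ((a'.val j : ℕ)) := toLex.injective hab
    exact Fin.val_injective (congrFun h' j)
  have strict : ∀ c : I, StrictMono ((fun j => ((c.val j : ℕ))) : Fin (r + 2) → ℕ) := by
    intro c a a' haa
    exact Fin.lt_def.mp (c.prop haa)
  -- the coefficient of the diagonal monomial is nonzero
  have hdiag : ∀ c : I, coeff (mcMon k r c.val) (catMinor k r c.val) ≠ 0 := by
    intro c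
    rw [catMinor_coeff, Finset.sum_eq_single 1]
    · rw [if_pos (catD_one k r c.val)]
      simp only [map_one, Units.val_one, Int.cast_one, one_mul]
      exact Finset.prod_ne_zero_iff.mpr fun i _ =>
        Nat.cast_ne_zero.mpr (Nat.factorial_ne_zero _)
    · intro σ _ hσne
      rw [if_neg, mul_zero]
      intro hcond
      rcases catKey' (strict c) (strict c) σ (catD_exists c.val c.val c.prop σ hcond)
        with ⟨j, _, hj2⟩ | ⟨-, h1⟩
      · exact absurd hj2 (lt_irrefl _)
      · exact hσne h1
    · intro h; exact absurd (Finset.mem_univ 1) h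
  -- triangularity: a nonzero off-diagonal coefficient forces a lex inequality
  have htri : ∀ c c₀ : I, coeff (mcMon k r c₀.val) (catMinor k r c.val) ≠ 0 →
      b c < b c₀ ∨ c = c₀ := by
    intro c c₀ hne
    rw [catMinor_coeff] at hne
    obtain ⟨σ, _, hσ⟩ := Finset.exists_ne_zero_of_sum_ne_zero hne
    have hcond : catD k r c.val σ = mcMon k r c₀.val := by
      by_contra hcc
      rw [if_neg hcc, mul_zero] at hσ
      exact hσ rfl
    have h1 := catD_exists c.val c₀.val c₀.prop σ hcond
    rcases catKey' (strict c) (strict c₀) σ h1 with hlex | ⟨heq, -⟩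
    · left
      exact hlex
    · right
      exact Subtype.ext (funext fun j => Fin.val_injective (congrFun heq j))
  rw [Fintype.linearIndependent_iff]
  intro g hg
  intro i
  by_contra hgi
  set s : Finset I := Finset.univ.filter (fun j : I => g j ≠ 0) with hs
  have hsne : s.Nonempty := ⟨i, by simp [hs, hgi]⟩
  obtain ⟨c0, hc0s, hmin⟩ := Finset.exists_min_image s b hsne
  have hgc0 : g c0 ≠ 0 := by
    have := hc0s
    simp only [hs, Finset.mem_filter] at this
    exact this.2
  have hcoeff := congrArg (coeff (mcMon k r c0.val)) hg
  rw [coeff_sum, coeff_zero] at hcoeff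
  have hterm : ∀ j : I, j ∈ Finset.univ → j ≠ c0 →
      coeff (mcMon k r c0.val) (g j • catMinor k r j.val) = 0 := by
    intro j _ hjne
    rw [coeff_smul]
    by_cases hgj : g j = 0
    · rw [hgj, zero_smul]
    · rcases (em (coeff (mcMon k r c0.val) (catMinor k r j.val) = 0)) with h0 | h0
      · rw [h0, smul_zero]
      · rcases htri j c0 h0 with hlt | heq
        · have hjs : j ∈ s := by simp [hs, hgj]
          exact absurd (lt_of_lt_of_le hlt (hmin j hjs)) (lt_irrefl _)
        · exact absurd heq hjne
  rw [Finset.sum_eq_single c0 hterm (fun h => absurd (Finset.mem_univ c0) h)] at hcoeff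
  rw [coeff_smul, smul_eq_mul] at hcoeff
  exact (mul_ne_zero hgc0 (hdiag c0)) hcoeff
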